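/- arXiv:2406.19975 — 4 statements merged into one kernel-verified Lean document; each statement's English description precedes it below -/
import Mathlib

section
/- Fix n ≥ 1 and a challenge c = (c_1,…,c_n) ∈ {0,1}^n. For arbitrary real numbers t_i, u_i, r_i, s_i (1 ≤ i ≤ n), define the accumulated delay difference recursively by Δ_0 = 0 and Δ_i = Δ_{i−1} + t_i − u_i if c_i = 0, and Δ_i = −Δ_{i−1} + s_i − r_i if c_i = 1. Define φ_i = (−1)^{c_i + c_{i+1} + … + c_n} for 1 ≤ i ≤ n and φ_{n+1} = 1, and define w_1 = (t_1 − u_1) − (s_1 − r_1), w_i = (t_{i−1} − u_{i−1}) + (s_{i−1} − r_{i−1}) + (t_i − u_i) − (s_i − r_i) for 2 ≤ i ≤ n, and w_{n+1} = (t_n − u_n) + (s_n − r_n). Then Δ_n = (1/2) · Σ_{i=1}^{n+1} φ_i w_i; in particular sign(Δ_n) = sign(Σ_{i=1}^{n+1} φ_i w_i). -/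
open Finset

private lemma sum_Icc_bot {f : ℕ → ℝ} {a b : ℕ} (h : a ≤ b) :
    ∑ i ∈ Finset.Icc a b, f i = f a + ∑ i ∈ Finset.Icc (a+1) b, f i := by
  have ha : a ∈ Finset.Icc a b := Finset.mem_Icc.mpr ⟨le_rfl, h⟩
  rw [← Finset.add_sum_erase _ f ha, Finset.Icc_erase_left, ← Finset.Icc_add_one_left_eq_Ioc]

/-- For a fixed challenge `c ∈ {0,1}^n` and arbitrary stage delays
`t_i, u_i, r_i, s_i`, the recursively accumulated delay difference
(`Δ_0 = 0`, `Δ_i = Δ_{i−1} + t_i − u_i` if `c_i = 0`, `Δ_i = −Δ_{i−1} + s_i − r_i` if `c_i = 1`)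
satisfies `Δ_n = (1/2) · Σ_{i=1}^{n+1} φ_i w_i`, where
`φ_i = (−1)^{c_i + ⋯ + c_n}` (`1 ≤ i ≤ n`), `φ_{n+1} = 1`, and `w` is the transformed
weight vector. In particular `sign(Δ_n) = sign(Σ_{i=1}^{n+1} φ_i w_i)`. -/
theorem stmt1 (n : ℕ) (hn : 1 ≤ n) (c : ℕ → ℕ)
    (hc : ∀ i, 1 ≤ i → i ≤ n → c i = 0 ∨ c i = 1)
    (t u r s : ℕ → ℝ)
    (Δ : ℕ → ℝ) (hΔ0 : Δ 0 = 0)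
    (hΔ : ∀ i, 1 ≤ i → i ≤ n →
      Δ i = if c i = 0 then Δ (i-1) + t i - u i else -Δ (i-1) + s i - r i)
    (φ : ℕ → ℝ)
    (hφ : ∀ i, 1 ≤ i → i ≤ n → φ i = (-1 : ℝ) ^ (∑ k ∈ Finset.Icc i n, c k))
    (hφlast : φ (n+1) = 1)
    (w : ℕ → ℝ)
    (hw1 : w 1 = (t 1 - u 1) - (s 1 - r 1))
    (hwmid : ∀ i, 2 ≤ i → i ≤ n →
      w i = (t (i-1) - u (i-1)) + (s (i-1) - r (i-1)) + (t i - u i) - (s i - r i))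
    (hwlast : w (n+1) = (t n - u n) + (s n - r n)) :
    Δ n = (1/2) * ∑ i ∈ Finset.Icc 1 (n+1), φ i * w i ∧
    Real.sign (Δ n) = Real.sign (∑ i ∈ Finset.Icc 1 (n+1), φ i * w i) := by
  set S : ℕ → ℝ := fun i => (-1 : ℝ) ^ (∑ k ∈ Finset.Icc (i+1) n, c k) with hS
  set D : ℕ → ℝ := fun i => if c i = 0 then t i - u i else s i - r i with hD
  -- step relation for S
  have hSstep : ∀ m, m + 1 ≤ n → S m = (-1 : ℝ) ^ (c (m+1)) * S (m+1) := by
    intro m hm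
    have : ∑ k ∈ Finset.Icc (m+1) n, c k = c (m+1) + ∑ k ∈ Finset.Icc (m+2) n, c k := by
      have ha : m + 1 ∈ Finset.Icc (m+1) n := Finset.mem_Icc.mpr ⟨le_rfl, hm⟩
      rw [← Finset.add_sum_erase _ c ha, Finset.Icc_erase_left, ← Finset.Icc_add_one_left_eq_Ioc]
      rfl
    simp only [hS, this, pow_add]
  -- main induction
  have key : ∀ m, m ≤ n → S m * Δ m = ∑ i ∈ Finset.Icc 1 m, S i * D i := by
    intro m
    induction m with
    | zero => intro _; simp [hΔ0]
    | succ m ih =>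
      intro hm
      have hm' : m ≤ n := le_of_lt (Nat.lt_of_succ_le hm)
      rw [Finset.sum_Icc_succ_top (Nat.succ_le_succ (Nat.zero_le m)), ← ih hm']
      have hrec := hΔ (m+1) (Nat.succ_le_succ (Nat.zero_le m)) hm
      simp only [Nat.add_sub_cancel] at hrec
      rcases hc (m+1) (Nat.succ_le_succ (Nat.zero_le m)) hm with h0 | h1
      · rw [hrec, if_pos h0, hSstep m hm, h0]
        simp only [hD, if_pos h0, pow_zero, one_mul]
        ring
      · rw [hrec, if_neg (by omega : ¬ c (m+1) = 0), hSstep m hm, h1]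
        simp only [hD, if_neg (by omega : ¬ c (m+1) = 0), pow_one]
        ring
  have hSn : S n = 1 := by
    simp [hS, Finset.Icc_eq_empty_of_lt (Nat.lt_succ_self n)]
  have hΔn : Δ n = ∑ i ∈ Finset.Icc 1 n, S i * D i := by
    have := key n le_rfl
    rwa [hSn, one_mul] at this
  -- φ (i+1) = S i for i ∈ [1, n]
  have hφS : ∀ i, 1 ≤ i → i ≤ n → φ (i+1) = S i := by
    intro i h1 h2
    rcases eq_or_lt_of_le h2 with rfl | hlt
    · rw [hφlast, hSn]
    · exact hφ (i+1) (by omega) hlt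
  have hφeq : ∀ i, 1 ≤ i → i ≤ n → φ i = (-1 : ℝ) ^ (c i) * S i := by
    intro i h1 h2
    rw [hφ i h1 h2]
    have : ∑ k ∈ Finset.Icc i n, c k = c i + ∑ k ∈ Finset.Icc (i+1) n, c k := by
      have ha : i ∈ Finset.Icc i n := Finset.mem_Icc.mpr ⟨le_rfl, h2⟩
      rw [← Finset.add_sum_erase _ c ha, Finset.Icc_erase_left, ← Finset.Icc_add_one_left_eq_Ioc]
    rw [this, pow_add]
  -- sum manipulation
  set F : ℕ → ℝ := fun i => (t i - u i) - (s i - r i) with hF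
  set G : ℕ → ℝ := fun i => (t i - u i) + (s i - r i) with hG
  have hsum : ∑ i ∈ Finset.Icc 1 (n+1), φ i * w i
      = ∑ i ∈ Finset.Icc 1 n, (φ i * F i + φ (i+1) * G i) := by
    rw [Finset.sum_Icc_succ_top (by omega : 1 ≤ n + 1)]
    rw [sum_Icc_bot hn]
    have hmid : ∑ i ∈ Finset.Icc 2 n, φ i * w i
        = ∑ i ∈ Finset.Icc 2 n, (φ i * G (i-1) + φ i * F i) := by
      apply Finset.sum_congr rfl
      intro i hi
      rw [Finset.mem_Icc] at hi
      rw [hwmid i hi.1 hi.2]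
      simp only [hF, hG]
      ring
    rw [hmid, Finset.sum_add_distrib]
    -- reindex ∑_{Icc 2 n} φ i * G (i-1) = ∑_{Icc 1 (n-1)} φ (i+1) * G i
    have hre : ∑ i ∈ Finset.Icc 2 n, φ i * G (i-1)
        = ∑ i ∈ Finset.Icc 1 (n-1), φ (i+1) * G i := by
      have hmap : Finset.Icc 2 n = Finset.map ⟨fun i => i + 1, add_left_injective 1⟩ (Finset.Icc 1 (n-1)) := by
        ext x
        simp only [Finset.mem_Icc, Finset.mem_map, Function.Embedding.coeFn_mk]
        constructor
        · intro ⟨h1, h2⟩; exact ⟨x - 1, ⟨by omega, by omega⟩, by omega⟩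
        · rintro ⟨y, ⟨hy1, hy2⟩, rfl⟩; omega
      rw [hmap, Finset.sum_map]
      apply Finset.sum_congr rfl
      intro i _
      simp
    rw [hre]
    have hsplit : ∑ i ∈ Finset.Icc 1 n, (φ i * F i + φ (i+1) * G i)
        = ∑ i ∈ Finset.Icc 1 n, φ i * F i + ∑ i ∈ Finset.Icc 1 n, φ (i+1) * G i := by
      rw [Finset.sum_add_distrib]
    rw [hsplit]
    rw [sum_Icc_bot (f := fun i => φ i * F i) hn]
    have : ∑ i ∈ Finset.Icc 1 n, φ (i+1) * G i
        = ∑ i ∈ Finset.Icc 1 (n-1), φ (i+1) * G i + φ (n+1) * G n := by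
      rw [show Finset.Icc 1 n = Finset.Icc 1 ((n-1)+1) from by rw [Nat.sub_add_cancel hn]]
      rw [Finset.sum_Icc_succ_top (by omega : 1 ≤ n - 1 + 1)]
      rw [Nat.sub_add_cancel hn]
    rw [this, hw1, hwlast]
    simp only [hF, hG]
    ring
  have htermwise : ∑ i ∈ Finset.Icc 1 n, (φ i * F i + φ (i+1) * G i)
      = 2 * ∑ i ∈ Finset.Icc 1 n, S i * D i := by
    rw [Finset.mul_sum]
    apply Finset.sum_congr rfl
    intro i hi
    rw [Finset.mem_Icc] at hi
    rw [hφeq i hi.1 hi.2, hφS i hi.1 hi.2]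
    rcases hc i hi.1 hi.2 with h0 | h1
    · simp only [hD, hF, hG, h0, pow_zero, if_pos]
      ring
    · simp only [hD, hF, hG, h1, pow_one, if_neg (one_ne_zero)]
      ring
  have hmain : Δ n = (1/2) * ∑ i ∈ Finset.Icc 1 (n+1), φ i * w i := by
    rw [hsum, htermwise, hΔn]; ring
  refine ⟨hmain, ?_⟩
  set T := ∑ i ∈ Finset.Icc 1 (n+1), φ i * w i
  rcases lt_trichotomy T 0 with h | h | h
  · rw [Real.sign_of_neg h, Real.sign_of_neg (by rw [hmain]; linarith)]
  · rw [h, hmain, h]; simp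
  · rw [Real.sign_of_pos h, Real.sign_of_pos (by rw [hmain]; linarith)]
end

section
/- Let U and V be independent standard Gaussian random variables and let ρ ∈ [−1, 1]. Set X = U and Y = ρU + √(1 − ρ²)·V, so that X and Y are standard Gaussians with correlation coefficient E[XY] = ρ. Then P[X > 0 and Y > 0] = 1/4 + arcsin(ρ)/(2π). -/
open MeasureTheory ProbabilityTheory
open scoped NNReal ENNReal
open Real Set

section Aux

lemma gauss_prod : (gaussianReal 0 1).prod (gaussianReal 0 1)
    = (volume : Measure (ℝ × ℝ)).withDensity
        (fun p => gaussianPDF 0 1 p.1 * gaussianPDF 0 1 p.2) := by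
  rw [Measure.volume_eq_prod]
  refine Measure.prod_eq fun s t hs ht => ?_
  rw [withDensity_apply _ (hs.prod ht), ← Measure.prod_restrict,
    lintegral_prod_mul (measurable_gaussianPDF 0 1).aemeasurable
      (measurable_gaussianPDF 0 1).aemeasurable,
    gaussianReal_apply 0 one_ne_zero s, gaussianReal_apply 0 one_ne_zero t]

lemma integral_r_exp : ∫ r in Ioi (0:ℝ), r * Real.exp (-(r^2)/2) = 1 := by
  have h12 : (0:ℝ) < 1/2 := by norm_num
  have key : ∀ x : ℝ, HasDerivAt (fun x : ℝ => -Real.exp (-(x^2)/2))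
      (x * Real.exp (-(x^2)/2)) x := by
    intro x
    have h1 : HasDerivAt (fun x : ℝ => -(x^2)/2) (-x) x := by
      have := ((hasDerivAt_pow 2 x).neg).div_const 2
      simpa using this.congr_deriv (by ring)
    have := (h1.exp).neg
    exact this.congr_deriv (by ring)
  have hint : IntegrableOn (fun x : ℝ => x * Real.exp (-(x^2)/2)) (Ioi 0) := by
    have := (integrable_mul_exp_neg_mul_sq h12).integrableOn (s := Ioi (0:ℝ))
    refine this.congr_fun (fun x _ => by ring_nf) measurableSet_Ioi
  have htend : Filter.Tendsto (fun x : ℝ => -Real.exp (-(x^2)/2)) Filter.atTop (nhds 0) := by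
    rw [← neg_zero]
    refine Filter.Tendsto.neg ?_
    refine Real.tendsto_exp_atBot.comp ?_
    have : Filter.Tendsto (fun x:ℝ => x^2/2) Filter.atTop Filter.atTop :=
      (Filter.tendsto_pow_atTop (by norm_num)).atTop_div_const (by norm_num)
    have h2 := Filter.tendsto_neg_atTop_atBot.comp this
    refine h2.congr fun x => ?_
    simp [Function.comp, neg_div]
  have := integral_Ioi_of_hasDerivAt_of_tendsto (f := fun x : ℝ => -Real.exp (-(x^2)/2))
    (f' := fun x : ℝ => x * Real.exp (-(x^2)/2)) (a := 0)
    (key 0).continuousAt.continuousWithinAt (fun x _ => key x) hint htend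
  simpa using this

lemma angle_iff {θ φ : ℝ} (hθ1 : -(π/2) ≤ θ) (hθ2 : θ ≤ π/2) (hφ1 : -π < φ) (hφ2 : φ < π) :
    (0 < Real.cos φ ∧ 0 < Real.sin (θ + φ)) ↔ (-θ < φ ∧ φ < π/2) := by
  constructor
  · rintro ⟨hc, hs⟩
    have hφ' : -(π/2) < φ ∧ φ < π/2 := by
      constructor
      · by_contra h
        push_neg at h
        have : Real.cos φ ≤ 0 := by
          rw [← Real.cos_neg]
          exact Real.cos_nonpos_of_pi_div_two_le_of_le (by linarith) (by linarith)
        linarith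
      · by_contra h
        push_neg at h
        have : Real.cos φ ≤ 0 :=
          Real.cos_nonpos_of_pi_div_two_le_of_le h (by linarith [Real.pi_pos])
        linarith
    refine ⟨?_, hφ'.2⟩
    by_contra h
    push_neg at h
    have : Real.sin (θ + φ) ≤ 0 :=
      Real.sin_nonpos_of_nonpos_of_neg_pi_le (by linarith) (by linarith)
    linarith
  · rintro ⟨h1, h2⟩
    have hφ1' : -(π/2) < φ := by linarith
    refine ⟨Real.cos_pos_of_mem_Ioo ⟨hφ1', h2⟩, ?_⟩
    exact Real.sin_pos_of_pos_of_lt_pi (by linarith) (by linarith)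

lemma gpdf_prod (x y : ℝ) : gaussianPDFReal 0 1 x * gaussianPDFReal 0 1 y
    = (2*π)⁻¹ * Real.exp (-(x^2+y^2)/2) := by
  simp only [gaussianPDFReal, NNReal.coe_one, mul_one, sub_zero]
  rw [show (Real.sqrt (2*π))⁻¹ * Real.exp (-x^2/2) * ((Real.sqrt (2*π))⁻¹ * Real.exp (-y^2/2))
      = (Real.sqrt (2*π) * Real.sqrt (2*π))⁻¹ * (Real.exp (-x^2/2) * Real.exp (-y^2/2)) by ring,
    Real.mul_self_sqrt (by positivity), ← Real.exp_add,
    show -x^2/2 + -y^2/2 = -(x^2+y^2)/2 by ring]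


end Aux

/-- If `U, V` are independent standard Gaussians, `ρ ∈ [−1,1]`,
`X = U` and `Y = ρU + √(1−ρ²)V` (standard Gaussians with correlation `ρ`), then
`P[X > 0 ∧ Y > 0] = 1/4 + arcsin ρ / (2π)`. -/
theorem stmt3
    {Ω : Type*} [MeasureSpace Ω] [IsProbabilityMeasure (ℙ : Measure Ω)]
    (U V : Ω → ℝ) (hUm : Measurable U) (hVm : Measurable V)
    (hindep : IndepFun U V ℙ)
    (hU : Measure.map U ℙ = gaussianReal 0 1)
    (hV : Measure.map V ℙ = gaussianReal 0 1)
    (ρ : ℝ) (hρ : -1 ≤ ρ) (hρ' : ρ ≤ 1) :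
    (ℙ {ω | 0 < U ω ∧ 0 < ρ * U ω + Real.sqrt (1 - ρ ^ 2) * V ω}).toReal
      = 1 / 4 + Real.arcsin ρ / (2 * Real.pi) := by
  set θ := Real.arcsin ρ with hθdef
  have hθ1 : -(π/2) ≤ θ := Real.neg_pi_div_two_le_arcsin ρ
  have hθ2 : θ ≤ π/2 := Real.arcsin_le_pi_div_two ρ
  have hsin : Real.sin θ = ρ := Real.sin_arcsin hρ hρ'
  have hcos : Real.sqrt (1 - ρ^2) = Real.cos θ := (Real.cos_arcsin ρ).symm
  set S : Set (ℝ × ℝ) := {p | 0 < p.1 ∧ 0 < ρ * p.1 + Real.sqrt (1 - ρ^2) * p.2} with hSdef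
  have hSm : MeasurableSet S := by
    apply MeasurableSet.inter
    · exact measurableSet_lt measurable_const measurable_fst
    · exact measurableSet_lt measurable_const
        ((measurable_fst.const_mul ρ).add (measurable_snd.const_mul _))
  have h1 : ℙ {ω | 0 < U ω ∧ 0 < ρ * U ω + Real.sqrt (1 - ρ ^ 2) * V ω}
      = Measure.map (fun ω => (U ω, V ω)) ℙ S := by
    rw [Measure.map_apply (hUm.prodMk hVm) hSm]
    rfl
  have h2 : Measure.map (fun ω => (U ω, V ω)) ℙ = (gaussianReal 0 1).prod (gaussianReal 0 1) := by
    rw [(indepFun_iff_map_prod_eq_prod_map_map hUm.aemeasurable hVm.aemeasurable).mp hindep,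
      hU, hV]
  rw [h1, h2, gauss_prod, withDensity_apply _ hSm]
  set g : ℝ × ℝ → ℝ := fun p => (2*π)⁻¹ * Real.exp (-(p.1^2+p.2^2)/2) with hgdef
  have hdens : ∀ p : ℝ × ℝ, gaussianPDF 0 1 p.1 * gaussianPDF 0 1 p.2
      = ENNReal.ofReal (g p) := by
    intro p
    rw [gaussianPDF, gaussianPDF, ← ENNReal.ofReal_mul (gaussianPDFReal_nonneg _ _ _), gpdf_prod]
  simp_rw [hdens]
  have hexp : Integrable (fun x : ℝ => Real.exp (-(1/2 : ℝ) * x^2)) :=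
    integrable_exp_neg_mul_sq (by norm_num)
  have hgint : Integrable g := by
    have h := ((hexp.const_mul ((2*π)⁻¹)).mul_prod hexp)
    rw [hgdef, Measure.volume_eq_prod]
    refine h.congr (Filter.Eventually.of_forall fun p => ?_)
    show (2*π)⁻¹ * Real.exp (-(1/2 : ℝ) * p.1^2) * Real.exp (-(1/2 : ℝ) * p.2^2)
      = (2*π)⁻¹ * Real.exp (-(p.1^2+p.2^2)/2)
    rw [mul_assoc, ← Real.exp_add]
    congr 1
    ring
  have hgnn : 0 ≤ᵐ[volume.restrict S] g :=
    Filter.Eventually.of_forall fun p => by positivity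
  rw [← ofReal_integral_eq_lintegral_ofReal hgint.integrableOn hgnn,
    ENNReal.toReal_ofReal (integral_nonneg fun p => by positivity)]
  rw [← integral_indicator hSm, ← integral_comp_polarCoord_symm (S.indicator g)]
  have hcongr : EqOn (fun p : ℝ × ℝ => p.1 • (S.indicator g) (polarCoord.symm p))
      (fun p : ℝ × ℝ => (p.1 * Real.exp (-(p.1^2)/2))
        * ((Ioo (-θ) (π/2)).indicator (fun _ => (2*π)⁻¹) p.2))
      polarCoord.target := by
    rintro ⟨r, φ⟩ ⟨hr, hφ⟩
    simp only [mem_Ioi] at hr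
    simp only [mem_Ioo] at hφ
    have hsymm : polarCoord.symm (r, φ) = (r * Real.cos φ, r * Real.sin φ) := rfl
    have hmem : (polarCoord.symm (r, φ) ∈ S) ↔ (φ ∈ Ioo (-θ) (π/2)) := by
      rw [hsymm, hSdef]
      simp only [mem_setOf_eq, mem_Ioo]
      have e1 : ρ * (r * Real.cos φ) + Real.sqrt (1 - ρ^2) * (r * Real.sin φ)
          = r * Real.sin (θ + φ) := by
        rw [hcos, Real.sin_add, ← hsin]
        ring
      rw [e1]
      rw [show (0 < r * Real.cos φ ∧ 0 < r * Real.sin (θ + φ))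
          ↔ (0 < Real.cos φ ∧ 0 < Real.sin (θ + φ)) by
        constructor
        · rintro ⟨a, b⟩
          constructor
          · nlinarith [Real.cos_le_one φ]
          · nlinarith [Real.sin_le_one (θ + φ)]
        · rintro ⟨a, b⟩
          exact ⟨mul_pos hr a, mul_pos hr b⟩]
      exact angle_iff hθ1 hθ2 hφ.1 hφ.2
    by_cases hm : polarCoord.symm (r, φ) ∈ S
    · simp only [indicator_of_mem hm, indicator_of_mem (hmem.mp hm), smul_eq_mul]
      rw [hsymm, hgdef]
      have e2 : (r * Real.cos φ)^2 + (r * Real.sin φ)^2 = r^2 := by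
        have := Real.sin_sq_add_cos_sq φ
        nlinarith [this]
      show r * ((2*π)⁻¹ * Real.exp (-((r * Real.cos φ)^2 + (r * Real.sin φ)^2)/2))
        = (r * Real.exp (-(r^2)/2)) * (2*π)⁻¹
      rw [e2]
      ring
    · simp only [indicator_of_notMem hm, indicator_of_notMem (fun h => hm (hmem.mpr h)),
        smul_zero, mul_zero]
  rw [setIntegral_congr_fun polarCoord.open_target.measurableSet hcongr]
  rw [show polarCoord.target = Ioi (0:ℝ) ×ˢ Ioo (-π) π from rfl]
  rw [Measure.volume_eq_prod, ← Measure.prod_restrict,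
    integral_prod_mul (fun r : ℝ => r * Real.exp (-(r^2)/2))
      (fun φ : ℝ => (Ioo (-θ) (π/2)).indicator (fun _ => (2*π)⁻¹) φ),
    integral_r_exp, one_mul]
  have hsub : Ioo (-θ) (π/2) ⊆ Ioo (-π) π := by
    intro x hx
    simp only [mem_Ioo] at hx ⊢
    have := Real.pi_pos
    constructor <;> [linarith; linarith]
  rw [setIntegral_indicator measurableSet_Ioo, inter_eq_self_of_subset_right hsub,
    setIntegral_const, measureReal_def, Real.volume_Ioo, ENNReal.toReal_ofReal (by linarith), smul_eq_mul]
  have hπ : (π : ℝ) ≠ 0 := Real.pi_ne_zero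
  field_simp
  ring
end

section
/- Let n ≥ 1, σ > 0, and let w = (w_1,…,w_{n+1}) be independent centered Gaussian random variables with Var(w_1) = Var(w_{n+1}) = 4σ² and Var(w_i) = 8σ² for 2 ≤ i ≤ n. For any two challenges Φ_1, Φ_2 ∈ {−1,+1}^{n+1} with φ_{1,n+1} = φ_{2,n+1} = 1, the random variables Φ_1·w and Φ_2·w each have variance 8nσ², and their correlation coefficient E[(Φ_1·w)(Φ_2·w)]/(8nσ²) equals 2·S(Φ_1,Φ_2)/n − 1, where S(Φ_1,Φ_2) = (1/2)·1{φ_{1,1}=φ_{2,1}} + Σ_{i=2}^n 1{φ_{1,i}=φ_{2,i}} + 1/2. -/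
open MeasureTheory ProbabilityTheory
open scoped NNReal ENNReal

namespace Stmt6Aux

open Real


lemma pdf_eq {v : ℝ≥0} (x : ℝ) :
    gaussianPDFReal 0 v x = (√(2 * π * v))⁻¹ * rexp (-(2*(v:ℝ))⁻¹ * x^2) := by
  simp only [gaussianPDFReal, sub_zero]
  congr 2
  ring

lemma pdf_neg {v : ℝ≥0} (x : ℝ) : gaussianPDFReal 0 v (-x) = gaussianPDFReal 0 v x := by
  simp only [gaussianPDFReal, sub_zero, neg_sq]

lemma int_sq_exp {b : ℝ} (hb : 0 < b) :
    ∫ x : ℝ, x^2 * rexp (-b * x^2) = b ^ (-(3:ℝ)/2) * (√π / 2) := by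
  have h1 : (fun x : ℝ => x^2 * rexp (-b*x^2)) = fun x : ℝ => |x|^2 * rexp (-b*|x|^2) := by
    funext x; rw [sq_abs]
  rw [show (∫ x : ℝ, x^2 * rexp (-b * x^2)) = ∫ x : ℝ, |x|^2 * rexp (-b*|x|^2) from by rw [← h1],
    integral_comp_abs (f := fun x : ℝ => x^2 * rexp (-b*x^2))]
  rw [setIntegral_congr_fun measurableSet_Ioi
    (g := fun x : ℝ => x ^ ((2:ℕ):ℝ) * rexp (-b * x ^ ((2:ℕ):ℝ)))
    (fun x hx => by
      show x ^ 2 * rexp (-b * x ^ 2) = x ^ ((2:ℕ):ℝ) * rexp (-b * x ^ ((2:ℕ):ℝ))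
      rw [Real.rpow_natCast])]
  rw [integral_rpow_mul_exp_neg_mul_rpow (by norm_num) (by norm_num) hb]
  rw [show (((2:ℕ):ℝ) + 1) / ((2:ℕ):ℝ) = 1/2 + 1 by norm_num,
    Real.Gamma_add_one (by norm_num), Real.Gamma_one_half_eq]
  rw [show (-(((2:ℕ):ℝ) + 1) / ((2:ℕ):ℝ)) = -(3:ℝ)/2 by norm_num]
  ring

lemma integrable_sq_exp {b : ℝ} (hb : 0 < b) :
    Integrable (fun x : ℝ => x^2 * rexp (-b*x^2)) := by
  have h := integrable_rpow_mul_exp_neg_mul_sq hb (s := ((2:ℕ):ℝ)) (by norm_num)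
  have h2 : (fun x : ℝ => x^2 * rexp (-b*x^2)) = fun x : ℝ => x ^ ((2:ℕ):ℝ) * rexp (-b*x^2) := by
    funext x; rw [Real.rpow_natCast]
  rw [h2]; exact h


lemma gaussianReal_eq {v : ℝ≥0} (hv : v ≠ 0) :
    gaussianReal 0 v
      = volume.withDensity (fun x => ((gaussianPDFReal 0 v x).toNNReal : ℝ≥0∞)) := by
  rw [gaussianReal, if_neg hv]; rfl

lemma integral_fun_gauss {v : ℝ≥0} (hv : v ≠ 0) (g : ℝ → ℝ) :
    ∫ x, g x ∂(gaussianReal 0 v) = ∫ x, gaussianPDFReal 0 v x * g x := by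
  rw [gaussianReal_eq hv,
    integral_withDensity_eq_integral_smul ((measurable_gaussianPDFReal 0 v).real_toNNReal) g]
  congr 1; funext x
  rw [NNReal.smul_def, smul_eq_mul, Real.coe_toNNReal _ (gaussianPDFReal_nonneg 0 v x)]

lemma integrable_iff_gauss {v : ℝ≥0} (hv : v ≠ 0) (g : ℝ → ℝ) :
    Integrable g (gaussianReal 0 v)
      ↔ Integrable (fun x => gaussianPDFReal 0 v x * g x) volume := by
  have hm := (measurable_gaussianPDFReal 0 v).real_toNNReal
  have heq : (fun x => (gaussianPDFReal 0 v x).toNNReal • g x)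
      = fun x => gaussianPDFReal 0 v x * g x := by
    funext x
    rw [NNReal.smul_def, smul_eq_mul, Real.coe_toNNReal _ (gaussianPDFReal_nonneg 0 v x)]
  rw [gaussianReal_eq hv, integrable_withDensity_iff_integrable_smul hm, heq]

lemma integral_id_gauss {v : ℝ≥0} (hv : v ≠ 0) :
    ∫ x, x ∂(gaussianReal 0 v) = 0 := by
  rw [integral_fun_gauss hv (fun x => x)]
  have key : (∫ x, gaussianPDFReal 0 v x * x)
      = ∫ x, gaussianPDFReal 0 v (-x) * (-x) := by
    conv_lhs => rw [← Measure.map_neg_eq_self (volume : Measure ℝ)]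
    exact (Homeomorph.neg ℝ).measurableEmbedding.integral_map _
  have h2 : (fun x : ℝ => gaussianPDFReal 0 v (-x) * (-x))
      = fun x : ℝ => -(gaussianPDFReal 0 v x * x) := by
    funext x; rw [pdf_neg]; ring
  rw [h2, integral_neg] at key
  linarith

lemma integral_sq_gauss {v : ℝ≥0} (hv : v ≠ 0) :
    ∫ x, x^2 ∂(gaussianReal 0 v) = (v:ℝ) := by
  have hvpos : (0:ℝ) < (v:ℝ) := by
    rcases (zero_le : (0:ℝ≥0) ≤ v).lt_or_eq with h | h
    · exact_mod_cast h
    · exact absurd h.symm hv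
  have hb : 0 < (2*(v:ℝ))⁻¹ := by positivity
  rw [integral_fun_gauss hv (fun x => x^2)]
  have h1 : (fun x : ℝ => gaussianPDFReal 0 v x * x^2)
      = fun x : ℝ => (√(2 * π * v))⁻¹ * (x^2 * rexp (-(2*(v:ℝ))⁻¹ * x^2)) := by
    funext x; rw [pdf_eq]; ring
  rw [h1, integral_const_mul, int_sq_exp hb]
  -- arithmetic
  have h2v : (0:ℝ) < 2 * (v:ℝ) := by linarith
  have hsqrtpi : (0:ℝ) < √π := Real.sqrt_pos.mpr Real.pi_pos
  have hsqrt2v : (0:ℝ) < √(2*(v:ℝ)) := Real.sqrt_pos.mpr h2v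
  have e1 : ((2*(v:ℝ))⁻¹) ^ (-(3:ℝ)/2) = (2*(v:ℝ)) * √(2*(v:ℝ)) := by
    rw [← Real.rpow_neg_one (2*(v:ℝ)), ← Real.rpow_mul h2v.le,
      show ((-1:ℝ))*(-(3:ℝ)/2) = 1 + 1/2 by norm_num, Real.rpow_add h2v, Real.rpow_one,
      ← Real.sqrt_eq_rpow]
  rw [e1, show 2*π*(v:ℝ) = (2*(v:ℝ))*π by ring, Real.sqrt_mul h2v.le]
  have h1' : √(2*(v:ℝ)) ≠ 0 := hsqrt2v.ne'
  have h2' : √π ≠ 0 := hsqrtpi.ne'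
  field_simp

lemma memLp_id_gauss {v : ℝ≥0} (hv : v ≠ 0) :
    MemLp (fun x : ℝ => x) 2 (gaussianReal 0 v) := by
  have hvpos : (0:ℝ) < (v:ℝ) := by
    rcases (zero_le : (0:ℝ≥0) ≤ v).lt_or_eq with h | h
    · exact_mod_cast h
    · exact absurd h.symm hv
  have hb : 0 < (2*(v:ℝ))⁻¹ := by positivity
  show MemLp id 2 (gaussianReal 0 v)
  rw [memLp_two_iff_integrable_sq aestronglyMeasurable_id]
  show Integrable (fun x : ℝ => x ^ 2) (gaussianReal 0 v)
  refine (integrable_iff_gauss hv _).mpr ?_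
  have h1 : (fun x : ℝ => gaussianPDFReal 0 v x * x^2)
      = fun x : ℝ => (√(2 * π * v))⁻¹ * (x^2 * rexp (-(2*(v:ℝ))⁻¹ * x^2)) := by
    funext x; rw [pdf_eq]; ring
  rw [h1]
  exact (integrable_sq_exp hb).const_mul _

end Stmt6Aux

/-- The similarity factor `S(Φ₁,Φ₂) = (1/2)·1{φ_{1,1}=φ_{2,1}} + Σ_{i=2}^n 1{φ_{1,i}=φ_{2,i}} + 1/2`
of two (1-based) challenge vectors. -/
noncomputable def simFactor (n : ℕ) (Φ₁ Φ₂ : ℕ → ℝ) : ℝ :=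
  (1/2) * (if Φ₁ 1 = Φ₂ 1 then 1 else 0)
    + (∑ i ∈ Finset.Icc 2 n, if Φ₁ i = Φ₂ i then (1 : ℝ) else 0) + 1/2

/-- In the APUF model (`w_1, …, w_{n+1}` independent centered Gaussians,
`Var(w_1) = Var(w_{n+1}) = 4σ²`, `Var(w_i) = 8σ²` for `2 ≤ i ≤ n`), for challenges
`Φ₁, Φ₂ ∈ {±1}^{n+1}` with last coordinate `1`, the variables `Φ₁·w` and `Φ₂·w` each have
variance `8nσ²` and correlation coefficient `E[(Φ₁·w)(Φ₂·w)]/(8nσ²) = 2S(Φ₁,Φ₂)/n − 1`. -/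
theorem stmt6
    {Ω : Type*} [MeasureSpace Ω] [IsProbabilityMeasure (ℙ : Measure Ω)]
    (n : ℕ) (hn : 1 ≤ n) (σ : ℝ≥0) (hσ : 0 < σ)
    (w : ℕ → Ω → ℝ) (hwm : ∀ i, Measurable (w i))
    (hindep : iIndepFun (fun i : Fin (n+1) => w ((i : ℕ) + 1)) ℙ)
    (hw1 : Measure.map (w 1) ℙ = gaussianReal 0 (4 * σ ^ 2))
    (hwlast : Measure.map (w (n+1)) ℙ = gaussianReal 0 (4 * σ ^ 2))
    (hwmid : ∀ i, 2 ≤ i → i ≤ n → Measure.map (w i) ℙ = gaussianReal 0 (8 * σ ^ 2))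
    (Φ₁ Φ₂ : ℕ → ℝ)
    (hΦ₁ : ∀ i, 1 ≤ i → i ≤ n + 1 → Φ₁ i = 1 ∨ Φ₁ i = -1) (hΦ₁last : Φ₁ (n+1) = 1)
    (hΦ₂ : ∀ i, 1 ≤ i → i ≤ n + 1 → Φ₂ i = 1 ∨ Φ₂ i = -1) (hΦ₂last : Φ₂ (n+1) = 1) :
    variance (fun ω => ∑ i ∈ Finset.Icc 1 (n+1), Φ₁ i * w i ω) ℙ = 8 * n * (σ : ℝ) ^ 2 ∧
    variance (fun ω => ∑ i ∈ Finset.Icc 1 (n+1), Φ₂ i * w i ω) ℙ = 8 * n * (σ : ℝ) ^ 2 ∧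
    (∫ ω, (∑ i ∈ Finset.Icc 1 (n+1), Φ₁ i * w i ω)
          * (∑ i ∈ Finset.Icc 1 (n+1), Φ₂ i * w i ω) ∂ℙ) / (8 * n * (σ : ℝ) ^ 2)
      = 2 * simFactor n Φ₁ Φ₂ / n - 1 := by
    classical
  set s : Finset ℕ := Finset.Icc 1 (n+1) with hs
  set V : ℕ → ℝ≥0 := fun i => if 2 ≤ i ∧ i ≤ n then 8*σ^2 else 4*σ^2 with hVdef
  have hσR : (0:ℝ) < (σ:ℝ) := hσ
  have hσ' : (σ:ℝ) ≠ 0 := hσR.ne'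
  have hnR : (0:ℝ) < (n:ℝ) := by exact_mod_cast hn
  have hVne : ∀ i, V i ≠ 0 := by
    intro i
    have hσ0 : σ ≠ 0 := hσ.ne'
    have h8 : (8*σ^2 : ℝ≥0) ≠ 0 := by simp [pow_eq_zero_iff, hσ0]
    have h4 : (4*σ^2 : ℝ≥0) ≠ 0 := by simp [pow_eq_zero_iff, hσ0]
    rw [hVdef]
    dsimp only
    split_ifs <;> assumption
  have hlaw : ∀ i ∈ s, Measure.map (w i) ℙ = gaussianReal 0 (V i) := by
    intro i hi
    rw [hs, Finset.mem_Icc] at hi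
    by_cases h : 2 ≤ i ∧ i ≤ n
    · rw [hVdef]; simp only [h, if_true, if_pos]; exact hwmid i h.1 h.2
    · have : i = 1 ∨ i = n + 1 := by omega
      have hV : V i = 4*σ^2 := by rw [hVdef]; simp only [h, if_false, if_neg, not_false_iff]
      rw [hV]
      rcases this with h1 | h1 <;> rw [h1]
      · exact hw1
      · exact hwlast
  have hmem : ∀ i ∈ s, MemLp (w i) 2 ℙ := by
    intro i hi
    have h := Stmt6Aux.memLp_id_gauss (hVne i)
    rw [← hlaw i hi] at h
    exact (memLp_map_measure_iff aestronglyMeasurable_id (hwm i).aemeasurable).mp h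
  have hint : ∀ i ∈ s, Integrable (w i) ℙ := fun i hi => (hmem i hi).integrable one_le_two
  have hmean : ∀ i ∈ s, ∫ ω, w i ω ∂ℙ = 0 := by
    intro i hi
    have h : ∫ ω, w i ω ∂ℙ = ∫ x, x ∂(Measure.map (w i) ℙ) :=
      (integral_map (hwm i).aemeasurable aestronglyMeasurable_id).symm
    rw [h, hlaw i hi, Stmt6Aux.integral_id_gauss (hVne i)]
  have hsq : ∀ i ∈ s, ∫ ω, w i ω * w i ω ∂ℙ = (V i : ℝ) := by
    intro i hi
    have h2 : (∫ x, x^2 ∂(Measure.map (w i) ℙ)) = ∫ ω, (w i ω)^2 ∂ℙ :=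
      integral_map (f := fun x : ℝ => x^2) (hwm i).aemeasurable
        ((measurable_id.pow_const 2).aestronglyMeasurable)
    have h1 : (∫ ω, w i ω * w i ω ∂ℙ) = ∫ ω, (w i ω)^2 ∂ℙ := by
      refine integral_congr_ae (Filter.Eventually.of_forall fun ω => ?_)
      simp [pow_two]
    rw [h1, ← h2, hlaw i hi, Stmt6Aux.integral_sq_gauss (hVne i)]
  have hindep' : ∀ i ∈ s, ∀ j ∈ s, i ≠ j → IndepFun (w i) (w j) ℙ := by
    intro i hi j hj hij
    rw [hs, Finset.mem_Icc] at hi hj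
    have h := hindep.indepFun (i := ⟨i-1, by omega⟩) (j := ⟨j-1, by omega⟩)
      (by simp only [ne_eq, Fin.mk.injEq]; omega)
    simpa [Nat.sub_add_cancel hi.1, Nat.sub_add_cancel hj.1] using h
  have hintmul : ∀ i ∈ s, ∀ j ∈ s, Integrable (fun ω => w i ω * w j ω) ℙ := by
    intro i hi j hj
    by_cases hij : i = j
    · subst hij
      have h := (hmem i hi).integrable_sq
      refine h.congr (Filter.Eventually.of_forall fun ω => ?_)
      simp [pow_two]
    · exact (hindep' i hi j hj hij).integrable_mul (hint i hi) (hint j hj)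
  have hcross : ∀ i ∈ s, ∀ j ∈ s,
      (∫ ω, w i ω * w j ω ∂ℙ) = if i = j then (V i : ℝ) else 0 := by
    intro i hi j hj
    by_cases hij : i = j
    · subst hij; rw [if_pos rfl]; exact hsq i hi
    · rw [if_neg hij]
      have h := (hindep' i hi j hj hij).integral_mul_eq_mul_integral (hwm i).aestronglyMeasurable
        (hwm j).aestronglyMeasurable
      have h2 : (∫ ω, w i ω * w j ω ∂ℙ) = ∫ ω, (w i * w j) ω ∂ℙ := rfl
      rw [h2]
      calc ∫ ω, (w i * w j) ω ∂ℙ = (∫ ω, w i ω ∂ℙ) * ∫ ω, w j ω ∂ℙ := h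
        _ = 0 := by rw [hmean i hi, hmean j hj, mul_zero]
  have key : ∀ a b : ℕ → ℝ, (∫ ω, (∑ i ∈ s, a i * w i ω) * (∑ j ∈ s, b j * w j ω) ∂ℙ)
      = ∑ i ∈ s, a i * b i * (V i : ℝ) := by
    intro a b
    have h1 : ∀ ω : Ω, (∑ i ∈ s, a i * w i ω) * (∑ j ∈ s, b j * w j ω)
        = ∑ i ∈ s, ∑ j ∈ s, a i * b j * (w i ω * w j ω) := by
      intro ω
      rw [Finset.sum_mul_sum]
      exact Finset.sum_congr rfl fun i _ => Finset.sum_congr rfl fun j _ => by ring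
    simp_rw [h1]
    rw [integral_finset_sum _ (fun i hi => integrable_finset_sum _
      (fun j hj => ((hintmul i hi j hj).const_mul (a i * b j))))]
    refine Finset.sum_congr rfl fun i hi => ?_
    rw [integral_finset_sum _ (fun j hj => ((hintmul i hi j hj).const_mul (a i * b j)))]
    have h2 : ∀ j ∈ s, (∫ ω, a i * b j * (w i ω * w j ω) ∂ℙ)
        = a i * b j * if i = j then (V i : ℝ) else 0 := by
      intro j hj
      rw [integral_const_mul, hcross i hi j hj]
    rw [Finset.sum_congr rfl h2,
      Finset.sum_eq_single i (fun j _ hji => by rw [if_neg fun h => hji h.symm, mul_zero])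
        (fun hnot => absurd hi hnot), if_pos rfl]
  have hmeanX : ∀ a : ℕ → ℝ, (∫ ω, (∑ i ∈ s, a i * w i ω) ∂ℙ) = 0 := by
    intro a
    rw [integral_finset_sum _ (fun i hi => (hint i hi).const_mul (a i))]
    refine Finset.sum_eq_zero fun i hi => ?_
    rw [integral_const_mul, hmean i hi, mul_zero]
  have hvarX : ∀ a : ℕ → ℝ, variance (fun ω => ∑ i ∈ s, a i * w i ω) ℙ
      = ∑ i ∈ s, a i * a i * (V i : ℝ) := by
    intro a
    have hXmem : MemLp (fun ω => ∑ i ∈ s, a i * w i ω) 2 ℙ := by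
      have h := memLp_finsetSum' s (fun i hi => (hmem i hi).const_mul (a i))
      have heq : (∑ i ∈ s, fun x => a i * w i x) = (fun ω => ∑ i ∈ s, a i * w i ω) := by
        funext ω; simp
      rwa [heq] at h
    rw [variance_eq_sub hXmem]
    have h1 : (ℙ[(fun ω => ∑ i ∈ s, a i * w i ω) ^ 2]) = ∑ i ∈ s, a i * a i * (V i : ℝ) := by
      rw [← key a a]
      refine integral_congr_ae (Filter.Eventually.of_forall fun ω => ?_)
      simp [pow_two]
    have h2 : (ℙ[fun ω => ∑ i ∈ s, a i * w i ω]) = 0 := hmeanX a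
    rw [h1, h2]
    ring
  -- arithmetic helpers
  have hsplit : ∀ f : ℕ → ℝ, (∑ i ∈ s, f i) = f 1 + (∑ i ∈ Finset.Icc 2 n, f i) + f (n+1) := by
    intro f
    have h1 : s = insert 1 (insert (n+1) (Finset.Icc 2 n)) := by
      rw [hs]; ext x
      simp only [Finset.mem_Icc, Finset.mem_insert]
      omega
    rw [h1, Finset.sum_insert (by simp only [Finset.mem_insert, Finset.mem_Icc]; omega),
      Finset.sum_insert (by simp only [Finset.mem_Icc]; omega)]
    ring
  have hV1 : (V 1 : ℝ) = 4 * (σ:ℝ)^2 := by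
    rw [hVdef]; simp only []; rw [if_neg (by omega)]; push_cast; ring
  have hVlast : (V (n+1) : ℝ) = 4 * (σ:ℝ)^2 := by
    rw [hVdef]; simp only []; rw [if_neg (by omega)]; push_cast; ring
  have hVmid : ∀ i ∈ Finset.Icc 2 n, (V i : ℝ) = 8 * (σ:ℝ)^2 := by
    intro i hi
    rw [Finset.mem_Icc] at hi
    rw [hVdef]; simp only []; rw [if_pos hi]; push_cast; ring
  have hcard : ((Finset.Icc 2 n).card : ℝ) = (n:ℝ) - 1 := by
    rw [Nat.card_Icc]
    have : n + 1 - 2 = n - 1 := by omega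
    rw [this]
    push_cast [Nat.cast_sub hn]
    ring
  have hvar : ∀ a : ℕ → ℝ, (∀ i, 1 ≤ i → i ≤ n + 1 → a i = 1 ∨ a i = -1) →
      variance (fun ω => ∑ i ∈ s, a i * w i ω) ℙ = 8 * n * (σ : ℝ) ^ 2 := by
    intro a ha
    rw [hvarX a, hsplit]
    have hone : ∀ i, 1 ≤ i → i ≤ n+1 → a i * a i = 1 := by
      intro i h1 h2
      rcases ha i h1 h2 with h | h <;> rw [h] <;> norm_num
    rw [hone 1 le_rfl (by omega), hone (n+1) (by omega) le_rfl, hV1, hVlast]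
    have hmid1 : ∀ i ∈ Finset.Icc 2 n, a i * a i * (V i : ℝ) = 8 * (σ:ℝ)^2 := by
      intro i hi
      rw [Finset.mem_Icc] at hi
      rw [hone i (by omega) (by omega), one_mul, hVmid i (by rw [Finset.mem_Icc]; omega)]
    rw [Finset.sum_congr rfl hmid1, Finset.sum_const, nsmul_eq_mul, hcard]
    ring
  refine ⟨hvar Φ₁ hΦ₁, hvar Φ₂ hΦ₂, ?_⟩
  rw [key Φ₁ Φ₂, hsplit]
  have hp : ∀ i, 1 ≤ i → i ≤ n+1 →
      Φ₁ i * Φ₂ i = 2 * (if Φ₁ i = Φ₂ i then (1:ℝ) else 0) - 1 := by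
    intro i h1 h2
    rcases hΦ₁ i h1 h2 with ha | ha <;> rcases hΦ₂ i h1 h2 with hb | hb <;>
      rw [ha, hb] <;> norm_num
  have hmidsum : (∑ i ∈ Finset.Icc 2 n, Φ₁ i * Φ₂ i * (V i : ℝ))
      = (2 * (∑ i ∈ Finset.Icc 2 n, if Φ₁ i = Φ₂ i then (1:ℝ) else 0) - ((n:ℝ) - 1))
        * (8 * (σ:ℝ)^2) := by
    have hmid2 : ∀ i ∈ Finset.Icc 2 n, Φ₁ i * Φ₂ i * (V i : ℝ)
        = (2 * (if Φ₁ i = Φ₂ i then (1:ℝ) else 0) - 1) * (8 * (σ:ℝ)^2) := by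
      intro i hi
      rw [Finset.mem_Icc] at hi
      rw [hp i (by omega) (by omega), hVmid i (by rw [Finset.mem_Icc]; omega)]
    rw [Finset.sum_congr rfl hmid2, ← Finset.sum_mul, Finset.sum_sub_distrib,
      ← Finset.mul_sum, Finset.sum_const, nsmul_eq_mul, mul_one, hcard]
  rw [hmidsum, hp 1 le_rfl (by omega), hΦ₁last, hΦ₂last, hV1, hVlast]
  rw [simFactor]
  set e1 : ℝ := if Φ₁ 1 = Φ₂ 1 then (1:ℝ) else 0 with he1
  set E : ℝ := ∑ i ∈ Finset.Icc 2 n, if Φ₁ i = Φ₂ i then (1:ℝ) else 0 with hE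
  field_simp
  ring
end

section
/- Let ρ_{12}, ρ_{13}, ρ_{23} ∈ [−1,1] with r_1 r_2 ρ_{12} > −1 for given r_1, r_2 ∈ {±1}, and suppose |ρ_{13}| ≠ |ρ_{23}|. Let P = (1/2)·[1 + (r_1·arcsin ρ_{13} + r_2·arcsin ρ_{23})/(π/2 + r_1 r_2·arcsin ρ_{12})]. Then: (i) P > 1/2 if and only if r_1·ρ_{13} + r_2·ρ_{23} > 0, and P < 1/2 if and only if r_1·ρ_{13} + r_2·ρ_{23} < 0; (ii) letting i ∈ {1,2} be the index maximizing |ρ_{i3}|, the sign of r_1·arcsin ρ_{13} + r_2·arcsin ρ_{23} equals r_i·sign(ρ_{i3}); consequently the maximizer of the conditional probability (the optimal one-guess prediction of the third response) is r̂ = r_i·sign(ρ_{i3}). -/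
private lemma pm_mul_mem {s x : ℝ} (hs : s = 1 ∨ s = -1)
    (hx : x ∈ Set.Icc (-1:ℝ) 1) : s * x ∈ Set.Icc (-1:ℝ) 1 := by
  obtain ⟨h1, h2⟩ := hx
  rcases hs with h | h <;> subst h <;> exact ⟨by linarith, by linarith⟩

private lemma abs_arcsin (x : ℝ) : |Real.arcsin x| = Real.arcsin |x| := by
  rcases le_or_gt 0 x with h | h
  · rw [abs_of_nonneg h, abs_of_nonneg (Real.arcsin_nonneg.2 h)]
  · rw [abs_of_neg h, abs_of_neg (Real.arcsin_lt_zero.2 h), Real.arcsin_neg]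

/-- Let `ρ₁₂, ρ₁₃, ρ₂₃ ∈ [−1,1]`, `r₁, r₂ ∈ {±1}` with
`r₁r₂ρ₁₂ > −1` and `|ρ₁₃| ≠ |ρ₂₃|`, and let
`P = (1/2)·[1 + (r₁·arcsin ρ₁₃ + r₂·arcsin ρ₂₃)/(π/2 + r₁r₂·arcsin ρ₁₂)]`.
Then (i) `P > 1/2 ↔ r₁ρ₁₃ + r₂ρ₂₃ > 0` and `P < 1/2 ↔ r₁ρ₁₃ + r₂ρ₂₃ < 0`;
(ii) with `(r, ρ)` the pair `(rᵢ, ρ_{i3})` for the index `i` maximizing `|ρ_{i3}|`,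
`sign(r₁·arcsin ρ₁₃ + r₂·arcsin ρ₂₃) = r·sign ρ`; consequently the optimal one-guess
prediction of the third response is `r̂ = r·sign ρ`, i.e. `P > 1/2 ↔ r·sign ρ = 1`
and `P < 1/2 ↔ r·sign ρ = −1`. -/
theorem stmt14 (ρ₁₂ ρ₁₃ ρ₂₃ : ℝ)
    (h₁₂ : ρ₁₂ ∈ Set.Icc (-1 : ℝ) 1) (h₁₃ : ρ₁₃ ∈ Set.Icc (-1 : ℝ) 1)
    (h₂₃ : ρ₂₃ ∈ Set.Icc (-1 : ℝ) 1)
    (r₁ r₂ : ℝ) (hr₁ : r₁ = 1 ∨ r₁ = -1) (hr₂ : r₂ = 1 ∨ r₂ = -1)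
    (hpos : -1 < r₁ * r₂ * ρ₁₂) (hne : |ρ₁₃| ≠ |ρ₂₃|)
    (P : ℝ)
    (hP : P = (1 / 2) * (1 + (r₁ * Real.arcsin ρ₁₃ + r₂ * Real.arcsin ρ₂₃)
        / (Real.pi / 2 + r₁ * r₂ * Real.arcsin ρ₁₂)))
    (r ρ : ℝ)
    (hmax₁ : |ρ₂₃| < |ρ₁₃| → r = r₁ ∧ ρ = ρ₁₃)
    (hmax₂ : |ρ₁₃| < |ρ₂₃| → r = r₂ ∧ ρ = ρ₂₃) :
    ((1 / 2 < P ↔ 0 < r₁ * ρ₁₃ + r₂ * ρ₂₃) ∧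
      (P < 1 / 2 ↔ r₁ * ρ₁₃ + r₂ * ρ₂₃ < 0)) ∧
    Real.sign (r₁ * Real.arcsin ρ₁₃ + r₂ * Real.arcsin ρ₂₃) = r * Real.sign ρ ∧
    (1 / 2 < P ↔ r * Real.sign ρ = 1) ∧
    (P < 1 / 2 ↔ r * Real.sign ρ = -1) := by
  set N : ℝ := r₁ * Real.arcsin ρ₁₃ + r₂ * Real.arcsin ρ₂₃ with hN
  set D : ℝ := Real.pi / 2 + r₁ * r₂ * Real.arcsin ρ₁₂ with hD
  -- r₁ * r₂ = ±1
  have hrr : r₁ * r₂ = 1 ∨ r₁ * r₂ = -1 := by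
    rcases hr₁ with h1 | h1 <;> rcases hr₂ with h2 | h2 <;> simp [h1, h2]
  -- D > 0
  have hDpos : 0 < D := by
    have hmem : r₁ * r₂ * ρ₁₂ ∈ Set.Icc (-1 : ℝ) 1 := pm_mul_mem hrr h₁₂
    have harc : r₁ * r₂ * Real.arcsin ρ₁₂ = Real.arcsin (r₁ * r₂ * ρ₁₂) := by
      rcases hrr with h | h <;> simp [h, Real.arcsin_neg]
    have : Real.arcsin (-1) < Real.arcsin (r₁ * r₂ * ρ₁₂) :=
      Real.strictMonoOn_arcsin (by norm_num) hmem hpos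
    rw [Real.arcsin_neg_one] at this
    rw [hD, harc]; linarith
  -- P comparisons reduce to sign of N
  have hPgt : 1 / 2 < P ↔ 0 < N := by
    rw [hP]
    constructor
    · intro h
      have h2 : 0 < N / D := by linarith
      exact (div_pos_iff.1 h2).elim (fun h => h.1) (fun h => absurd h.2 hDpos.not_gt)
    · intro h
      have h2 : 0 < N / D := div_pos h hDpos
      linarith
  have hPlt : P < 1 / 2 ↔ N < 0 := by
    rw [hP]
    constructor
    · intro h
      have h2 : N / D < 0 := by linarith
      exact (div_neg_iff.1 h2).elim (fun h => absurd h.2 hDpos.not_gt) (fun h => h.1)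
    · intro h
      have h2 : N / D < 0 := div_neg_of_neg_of_pos h hDpos
      linarith
  -- memberships
  have hm13 : r₁ * ρ₁₃ ∈ Set.Icc (-1 : ℝ) 1 := pm_mul_mem hr₁ h₁₃
  have hm23 : r₂ * ρ₂₃ ∈ Set.Icc (-1 : ℝ) 1 := pm_mul_mem hr₂ h₂₃
  have hm23' : -(r₂ * ρ₂₃) ∈ Set.Icc (-1 : ℝ) 1 :=
    ⟨neg_le_neg hm23.2, by linarith [hm23.1]⟩
  -- N written via arcsin of products
  have hNarc : N = Real.arcsin (r₁ * ρ₁₃) + Real.arcsin (r₂ * ρ₂₃) := by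
    rw [hN]
    rcases hr₁ with h1 | h1 <;> rcases hr₂ with h2 | h2 <;>
      simp [h1, h2, Real.arcsin_neg]
  -- N > 0 ↔ sum > 0
  have hNpos : 0 < N ↔ 0 < r₁ * ρ₁₃ + r₂ * ρ₂₃ := by
    rw [hNarc]
    constructor
    · intro h
      have h' : Real.arcsin (-(r₂ * ρ₂₃)) < Real.arcsin (r₁ * ρ₁₃) := by
        rw [Real.arcsin_neg]; linarith
      have := (Real.strictMonoOn_arcsin.lt_iff_lt hm23' hm13).1 h'
      linarith
    · intro h
      have h' : Real.arcsin (-(r₂ * ρ₂₃)) < Real.arcsin (r₁ * ρ₁₃) :=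
        Real.strictMonoOn_arcsin hm23' hm13 (by linarith)
      rw [Real.arcsin_neg] at h'
      linarith
  have hNneg : N < 0 ↔ r₁ * ρ₁₃ + r₂ * ρ₂₃ < 0 := by
    rw [hNarc]
    constructor
    · intro h
      have h' : Real.arcsin (r₁ * ρ₁₃) < Real.arcsin (-(r₂ * ρ₂₃)) := by
        rw [Real.arcsin_neg]; linarith
      have := (Real.strictMonoOn_arcsin.lt_iff_lt hm13 hm23').1 h'
      linarith
    · intro h
      have h' : Real.arcsin (r₁ * ρ₁₃) < Real.arcsin (-(r₂ * ρ₂₃)) :=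
        Real.strictMonoOn_arcsin hm13 hm23' (by linarith)
      rw [Real.arcsin_neg] at h'
      linarith
  -- sign identity
  have habs : ∀ x y : ℝ, x ∈ Set.Icc (-1:ℝ) 1 → y ∈ Set.Icc (-1:ℝ) 1 →
      |y| < |x| → |Real.arcsin y| < |Real.arcsin x| := by
    intro x y hx hy h
    rw [abs_arcsin, abs_arcsin]
    exact Real.strictMonoOn_arcsin
      ⟨by linarith [abs_nonneg y], abs_le.2 ⟨hy.1, hy.2⟩⟩
      ⟨by linarith [abs_nonneg x], abs_le.2 ⟨hx.1, hx.2⟩⟩ h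
  have habs1 : |r₁ * Real.arcsin ρ₁₃| = |Real.arcsin ρ₁₃| := by
    rcases hr₁ with h | h <;> simp [h, abs_neg]
  have habs2 : |r₂ * Real.arcsin ρ₂₃| = |Real.arcsin ρ₂₃| := by
    rcases hr₂ with h | h <;> simp [h, abs_neg]
  have signlem : ∀ x : ℝ, (Real.sign x = 1 ↔ 0 < x) ∧ (Real.sign x = -1 ↔ x < 0) := by
    intro x
    rcases lt_trichotomy x 0 with h | h | h
    · rw [Real.sign_of_neg h]
      constructor
      · constructor <;> intro h' <;> [norm_num at h'; linarith]
      · constructor <;> intro h' <;> [exact h; rfl]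
    · subst h
      rw [Real.sign_zero]
      constructor <;> constructor <;> intro h' <;> norm_num at h'
    · rw [Real.sign_of_pos h]
      constructor
      · constructor <;> intro h' <;> [exact h; rfl]
      · constructor <;> intro h' <;> [norm_num at h'; linarith]
  have hsign : Real.sign N = r * Real.sign ρ := by
    rcases hne.lt_or_gt with hlt | hlt
    · -- |ρ₁₃| < |ρ₂₃| : dominant index 2
      obtain ⟨hr, hρ⟩ := hmax₂ hlt
      rw [hr, hρ]
      have hA : |r₁ * Real.arcsin ρ₁₃| < |r₂ * Real.arcsin ρ₂₃| := by
        rw [habs1, habs2]; exact habs _ _ h₂₃ h₁₃ hlt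
      have h1 := neg_abs_le (r₁ * Real.arcsin ρ₁₃)
      have h2 := le_abs_self (r₁ * Real.arcsin ρ₁₃)
      rcases lt_trichotomy ρ₂₃ 0 with hc | hc | hc
      · have hB : Real.arcsin ρ₂₃ < 0 := Real.arcsin_lt_zero.2 hc
        rw [Real.sign_of_neg hc]
        rcases hr₂ with h | h
        · have hBabs : |r₂ * Real.arcsin ρ₂₃| = -(r₂ * Real.arcsin ρ₂₃) := by
            rw [h]; simp [abs_of_neg hB]
          have : N < 0 := by rw [hN]; linarith
          rw [Real.sign_of_neg this, h]; ring
        · have hBabs : |r₂ * Real.arcsin ρ₂₃| = r₂ * Real.arcsin ρ₂₃ := by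
            rw [h]; simp [abs_of_neg hB]
          have : 0 < N := by rw [hN]; linarith
          rw [Real.sign_of_pos this, h]; ring
      · exfalso; rw [hc] at hlt; simp at hlt
        exact absurd hlt (abs_nonneg ρ₁₃).not_gt
      · have hB : 0 < Real.arcsin ρ₂₃ := Real.arcsin_pos.2 hc
        rw [Real.sign_of_pos hc]
        rcases hr₂ with h | h
        · have hBabs : |r₂ * Real.arcsin ρ₂₃| = r₂ * Real.arcsin ρ₂₃ := by
            rw [h]; simp [abs_of_pos hB]
          have : 0 < N := by rw [hN]; linarith
          rw [Real.sign_of_pos this, h]; ring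
        · have hBabs : |r₂ * Real.arcsin ρ₂₃| = -(r₂ * Real.arcsin ρ₂₃) := by
            rw [h]; simp [abs_of_pos hB]
          have : N < 0 := by rw [hN]; linarith
          rw [Real.sign_of_neg this, h]; ring
    · -- |ρ₂₃| < |ρ₁₃| : dominant index 1
      obtain ⟨hr, hρ⟩ := hmax₁ hlt
      rw [hr, hρ]
      have hA : |r₂ * Real.arcsin ρ₂₃| < |r₁ * Real.arcsin ρ₁₃| := by
        rw [habs1, habs2]; exact habs _ _ h₁₃ h₂₃ hlt
      have h1 := neg_abs_le (r₂ * Real.arcsin ρ₂₃)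
      have h2 := le_abs_self (r₂ * Real.arcsin ρ₂₃)
      rcases lt_trichotomy ρ₁₃ 0 with hc | hc | hc
      · have hB : Real.arcsin ρ₁₃ < 0 := Real.arcsin_lt_zero.2 hc
        rw [Real.sign_of_neg hc]
        rcases hr₁ with h | h
        · have hBabs : |r₁ * Real.arcsin ρ₁₃| = -(r₁ * Real.arcsin ρ₁₃) := by
            rw [h]; simp [abs_of_neg hB]
          have : N < 0 := by rw [hN]; linarith
          rw [Real.sign_of_neg this, h]; ring
        · have hBabs : |r₁ * Real.arcsin ρ₁₃| = r₁ * Real.arcsin ρ₁₃ := by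
            rw [h]; simp [abs_of_neg hB]
          have : 0 < N := by rw [hN]; linarith
          rw [Real.sign_of_pos this, h]; ring
      · exfalso; rw [hc] at hlt; simp at hlt
        exact absurd hlt (abs_nonneg ρ₂₃).not_gt
      · have hB : 0 < Real.arcsin ρ₁₃ := Real.arcsin_pos.2 hc
        rw [Real.sign_of_pos hc]
        rcases hr₁ with h | h
        · have hBabs : |r₁ * Real.arcsin ρ₁₃| = r₁ * Real.arcsin ρ₁₃ := by
            rw [h]; simp [abs_of_pos hB]
          have : 0 < N := by rw [hN]; linarith
          rw [Real.sign_of_pos this, h]; ring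
        · have hBabs : |r₁ * Real.arcsin ρ₁₃| = -(r₁ * Real.arcsin ρ₁₃) := by
            rw [h]; simp [abs_of_pos hB]
          have : N < 0 := by rw [hN]; linarith
          rw [Real.sign_of_neg this, h]; ring
  refine ⟨⟨hPgt.trans hNpos, hPlt.trans hNneg⟩, hsign, ?_, ?_⟩
  · rw [← hsign]
    exact hPgt.trans (signlem N).1.symm
  · rw [← hsign]
    exact hPlt.trans (signlem N).2.symm
end
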